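/- Let V be a finite-dimensional real vector space and let φ : V → V be a linear endomorphism such that every root in ℂ of the characteristic polynomial of φ is a positive real number. Suppose that for some vector D ∈ V, some real number λ > 0 and some integer m ≥ 1 one has φ^m(D) = λ^m · D. Then φ(D) = λ · D. -/
import Mathlib

open Polynomial

/-- Lemma 2.4 ('lem_positive_notreplaced'), linear-algebra content:
if every complex root of the characteristic polynomial of `φ` is a positive real
number, and `φ^m D = λ^m • D` for some `λ > 0` and `m ≥ 1`, then `φ D = λ • D`. -/
theorem positive_eigenvalues_power_eigvec {V : Type*} [AddCommGroup V] [Module ℝ V]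
    [FiniteDimensional ℝ V] (φ : V →ₗ[ℝ] V)
    (hroots : ∀ z : ℂ, ((LinearMap.charpoly φ).map (algebraMap ℝ ℂ)).IsRoot z →
      ∃ r : ℝ, 0 < r ∧ z = (r : ℂ))
    (D : V) (lam : ℝ) (hlam : 0 < lam) (m : ℕ) (hm : 1 ≤ m)
    (h : (φ ^ m) D = lam ^ m • D) :
    φ D = lam • D := by
  classical
  set p : ℝ[X] := LinearMap.charpoly φ with hp
  set q : ℝ[X] := ∑ i ∈ Finset.range m, C (lam ^ (m - 1 - i)) * X ^ i with hq
  -- `q` has no common complex root with `p`, hence is coprime to `p` over `ℝ`.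
  have hcop : IsCoprime q p := by
    rw [← Polynomial.isCoprime_map (algebraMap ℝ ℂ)]
    by_contra hc
    set g : ℂ[X] := EuclideanDomain.gcd (q.map (algebraMap ℝ ℂ)) (p.map (algebraMap ℝ ℂ))
      with hg
    have hgu : ¬ IsUnit g := fun hu => hc (EuclideanDomain.gcd_isUnit_iff.mp hu)
    have hdeg : g.degree ≠ 0 := fun hd => hgu (isUnit_iff_degree_eq_zero.mpr hd)
    obtain ⟨z, hz⟩ := IsAlgClosed.exists_root g hdeg
    have hzq : (q.map (algebraMap ℝ ℂ)).IsRoot z :=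
      hz.dvd (EuclideanDomain.gcd_dvd_left _ _)
    have hzp : (p.map (algebraMap ℝ ℂ)).IsRoot z :=
      hz.dvd (EuclideanDomain.gcd_dvd_right _ _)
    obtain ⟨r, hr, rfl⟩ := hroots z hzp
    -- evaluate `q` at the positive real `r`
    have heval : (q.map (algebraMap ℝ ℂ)).eval ((r : ℂ)) = ((q.eval r : ℝ) : ℂ) := by
      rw [eval_map]
      exact (Polynomial.eval₂_at_apply (algebraMap ℝ ℂ) r).trans rfl
    have hqr : q.eval r = ∑ i ∈ Finset.range m, lam ^ (m - 1 - i) * r ^ i := by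
      simp [hq, Polynomial.eval_finset_sum]
    have hpos : 0 < q.eval r := by
      rw [hqr]
      apply Finset.sum_pos
      · intro i _
        positivity
      · exact Finset.nonempty_range_iff.mpr (by omega)
    rw [Polynomial.IsRoot, heval] at hzq
    exact absurd (Complex.ofReal_eq_zero.mp hzq) hpos.ne'
  -- Bézout + Cayley–Hamilton: `aeval φ q` has a left inverse.
  obtain ⟨a, b, hab⟩ := hcop
  set ψ : Module.End ℝ V := aeval φ q with hψ
  have hinv : (aeval φ a) * ψ = 1 := by
    have := congrArg (aeval φ) hab
    simpa [hψ, map_add, map_mul, LinearMap.aeval_self_charpoly, hp] using this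
  -- `ψ * (φ - lam • 1) = φ^m - lam^m • 1`
  have hcomm : Commute φ (lam • (1 : Module.End ℝ V)) := (Commute.one_right φ).smul_right lam
  have hψeq : ψ = ∑ i ∈ Finset.range m, φ ^ i * (lam • (1 : Module.End ℝ V)) ^ (m - 1 - i) := by
    rw [hψ, hq, map_sum]
    refine Finset.sum_congr rfl fun i _ => ?_
    rw [map_mul, aeval_C, aeval_X_pow, _root_.smul_pow, one_pow, mul_smul_comm, mul_one,
      Algebra.algebraMap_eq_smul_one, smul_mul_assoc, one_mul]
  have hfactor : ψ * (φ - lam • 1) = φ ^ m - (lam • (1 : Module.End ℝ V)) ^ m := by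
    rw [hψeq]
    exact hcomm.geom_sum₂_mul m
  have hker : ψ ((φ - lam • 1) D) = 0 := by
    have := congrArg (fun f : Module.End ℝ V => f D) hfactor
    simp only [Module.End.mul_apply] at this
    rw [this]
    simp [_root_.smul_pow, h, LinearMap.sub_apply, LinearMap.smul_apply]
  have : (φ - lam • 1) D = 0 := by
    have h1 := congrArg (fun f : Module.End ℝ V => f ((φ - lam • 1) D)) hinv
    simp only [Module.End.mul_apply, Module.End.one_apply] at h1
    rw [hker, map_zero] at h1
    exact h1.symm
  have := sub_eq_zero.mp (by simpa [LinearMap.sub_apply, LinearMap.smul_apply] using this)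
  simpa using this
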